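/- Every root system Φ in a Euclidean space (U, (·,·)) is a system of roots: in particular, for β, α ∈ Φ, if (q, p) is the integer pair of the extremal root chain through β in the direction α (i.e., q, p maximal nonnegative integers such that β + jα ∈ Φ ∪ {0} for all integers −q ≤ j ≤ p), then 2(β, α)/(α, α) = q − p. -/

import Mathlib

open RealInnerProductSpace

/-- `IsChainPair S β α q p` says that the extremal root chain through `β` in the
direction `α` inside `S` has integer pair `(q, p)`. -/
def IsChainPair {V : Type*} [AddCommGroup V] [Module ℝ V]
    (S : Set V) (β α : V) (q p : ℕ) : Prop :=
  (∀ j : ℤ, -(q : ℤ) ≤ j → j ≤ (p : ℤ) → β + j • α ∈ S) ∧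
  β + (-(q : ℤ) - 1) • α ∉ S ∧ β + ((p : ℤ) + 1) • α ∉ S

/-- A root system in a Euclidean vector space. -/
structure IsRootSystem {U : Type*} [NormedAddCommGroup U] [InnerProductSpace ℝ U]
    (Φ : Set U) : Prop where
  finite : Φ.Finite
  nonzero : ∀ v ∈ Φ, v ≠ 0
  spans : Submodule.span ℝ Φ = ⊤
  smul_mem_iff : ∀ α ∈ Φ, ∀ t : ℝ, (t • α ∈ Φ ↔ |t| = 1)
  reflect_mem : ∀ α ∈ Φ, ∀ β ∈ Φ, β - (2 * ⟪β, α⟫ / ⟪α, α⟫) • α ∈ Φ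
  integral : ∀ α ∈ Φ, ∀ β ∈ Φ, ∃ n : ℤ, 2 * ⟪β, α⟫ / ⟪α, α⟫ = (n : ℝ)

lemma inner_self_pos' {U : Type*} [NormedAddCommGroup U] [InnerProductSpace ℝ U]
    {x : U} (hx : x ≠ 0) : (0:ℝ) < ⟪x, x⟫ := by
  rw [real_inner_self_eq_norm_sq]
  exact pow_pos (norm_pos_iff.mpr hx) 2

/-- Key lemma: if `γ, α' ∈ Φ` and `⟪γ, α'⟫ < 0`, then `γ + α' ∈ Φ ∪ {0}`. -/
lemma keyA {U : Type*} [NormedAddCommGroup U] [InnerProductSpace ℝ U]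
    {Φ : Set U} (h : IsRootSystem Φ) {γ α' : U} (hγ : γ ∈ Φ) (hα' : α' ∈ Φ)
    (hneg : ⟪γ, α'⟫ < 0) : γ + α' ∈ Φ ∪ {0} := by
  by_cases hz : γ + α' = 0
  · right; simp [hz]
  have hγ0 : γ ≠ 0 := h.nonzero γ hγ
  have hα0 : α' ≠ 0 := h.nonzero α' hα'
  have hγγ : (0:ℝ) < ⟪γ, γ⟫ := inner_self_pos' hγ0
  have hαα : (0:ℝ) < ⟪α', α'⟫ := inner_self_pos' hα0
  obtain ⟨a, ha⟩ := h.integral α' hα' γ hγ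
  obtain ⟨b, hb⟩ := h.integral γ hγ α' hα'
  have hcomm : ⟪α', γ⟫ = ⟪γ, α'⟫ := real_inner_comm _ _
  have haneg : (a:ℝ) < 0 := by
    rw [← ha]; exact div_neg_of_neg_of_pos (by linarith) hαα
  have hbneg : (b:ℝ) < 0 := by
    rw [← hb, hcomm]; exact div_neg_of_neg_of_pos (by linarith) hγγ
  have ha1 : a ≤ -1 := by
    have : a < 0 := by exact_mod_cast haneg
    omega
  have hb1 : b ≤ -1 := by
    have : b < 0 := by exact_mod_cast hbneg
    omega
  -- strict Cauchy-Schwarz: γ is not a negative multiple of α'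
  have hcs : ⟪γ, α'⟫ ^ 2 < ⟪γ, γ⟫ * ⟪α', α'⟫ := by
    have hne : ‖α'‖ • (-γ) ≠ ‖-γ‖ • α' := by
      intro heq
      have hα'n : ‖α'‖ ≠ 0 := norm_ne_zero_iff.mpr hα0
      have h2 := congrArg (fun v => (‖α'‖⁻¹ : ℝ) • v) heq
      simp only [smul_smul, norm_neg] at h2
      rw [inv_mul_cancel₀ hα'n, one_smul] at h2
      -- h2 : -γ = (‖α'‖⁻¹ * ‖γ‖) • α'
      have hγeq : γ = (-(‖γ‖ / ‖α'‖)) • α' := by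
        rw [neg_smul, div_eq_inv_mul, ← h2, neg_neg]
      have habs : |(-(‖γ‖ / ‖α'‖))| = 1 :=
        (h.smul_mem_iff α' hα' _).mp (hγeq ▸ hγ)
      have hdiv1 : ‖γ‖ / ‖α'‖ = 1 := by
        rw [abs_neg, abs_of_nonneg (by positivity)] at habs; exact habs
      have : γ = -α' := by
        rw [hγeq, hdiv1]; simp
      exact hz (by rw [this]; simp)
    have hlt : ⟪-γ, α'⟫ < ‖-γ‖ * ‖α'‖ := inner_lt_norm_mul_iff_real.mpr hne
    have hnn : (0:ℝ) ≤ ⟪-γ, α'⟫ := by rw [inner_neg_left]; linarith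
    have hsq : ⟪-γ, α'⟫ ^ 2 < (‖γ‖ * ‖α'‖) ^ 2 := by
      rw [norm_neg] at hlt
      nlinarith [norm_nonneg γ, norm_nonneg α']
    have h5 : ⟪γ, γ⟫ * ⟪α', α'⟫ = (‖γ‖ * ‖α'‖) ^ 2 := by
      rw [real_inner_self_eq_norm_sq, real_inner_self_eq_norm_sq]; ring
    rw [inner_neg_left, neg_sq] at hsq
    linarith
  have hab4 : (a:ℝ) * b < 4 := by
    rw [← ha, ← hb, hcomm]
    rw [div_mul_div_comm]
    rw [div_lt_iff₀ (by positivity)]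
    nlinarith
  have : a = -1 ∨ b = -1 := by
    by_contra hc
    push_neg at hc
    have ha2 : a ≤ -2 := by omega
    have hb2 : b ≤ -2 := by omega
    have : (4:ℝ) ≤ (a:ℝ) * b := by
      have ha2' : (a:ℝ) ≤ -2 := by exact_mod_cast ha2
      have hb2' : (b:ℝ) ≤ -2 := by exact_mod_cast hb2
      nlinarith
    linarith
  rcases this with hA | hB
  · left
    have := h.reflect_mem α' hα' γ hγ
    rw [ha, hA] at this
    simpa using this
  · left
    have := h.reflect_mem γ hγ α' hα'
    rw [hb, hB] at this
    rw [add_comm]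
    simpa using this

/-- If `γ ∈ Φ ∪ {0}`, `α' ∈ Φ` and `γ + α' ∉ Φ ∪ {0}`, then `⟪γ, α'⟫ ≥ 0`. -/
lemma keyB {U : Type*} [NormedAddCommGroup U] [InnerProductSpace ℝ U]
    {Φ : Set U} (h : IsRootSystem Φ) {γ α' : U} (hγ : γ ∈ Φ ∪ {0}) (hα' : α' ∈ Φ)
    (hnot : γ + α' ∉ Φ ∪ {0}) : 0 ≤ ⟪γ, α'⟫ := by
  rcases hγ with hγ | hγ
  · by_contra hc
    push_neg at hc
    exact hnot (keyA h hγ hα' hc)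
  · exact absurd (by simp only [Set.mem_singleton_iff] at hγ; rw [hγ, zero_add]; exact Set.mem_union_left _ hα') hnot

lemma inner_aux {U : Type*} [NormedAddCommGroup U] [InnerProductSpace ℝ U]
    (β α : U) (m : ℤ) : ⟪β + m • α, α⟫ = ⟪β, α⟫ + (m:ℝ) * ⟪α, α⟫ := by
  rw [← Int.cast_smul_eq_zsmul ℝ, inner_add_left, real_inner_smul_left]

/-- Every root system is a system of roots: the Killing integer `q - p` of the
extremal root chain through `β` in the direction `α` equals `2(β,α)/(α,α)`. -/
theorem stmt6 {U : Type*} [NormedAddCommGroup U] [InnerProductSpace ℝ U]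
    [FiniteDimensional ℝ U] (Φ : Set U) (h : IsRootSystem Φ)
    (β α : U) (hβ : β ∈ Φ) (hα : α ∈ Φ) (q p : ℕ)
    (hchain : IsChainPair (Φ ∪ {0}) β α q p) :
    2 * ⟪β, α⟫ / ⟪α, α⟫ = (q : ℝ) - (p : ℝ) := by
  obtain ⟨hmem, hlow, hhigh⟩ := hchain
  have hα0 : α ≠ 0 := h.nonzero α hα
  have hαα : (0:ℝ) < ⟪α, α⟫ := inner_self_pos' hα0
  have hnegα : -α ∈ Φ := by
    have := (h.smul_mem_iff α hα (-1)).mpr (by norm_num)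
    simpa using this
  obtain ⟨n, hn⟩ := h.integral α hα β hβ
  -- the inner product of the top element of the string with α is ≥ 0
  have htop : (0:ℝ) ≤ ⟪β, α⟫ + (p:ℝ) * ⟪α, α⟫ := by
    have h0 : (0:ℝ) ≤ ⟪β + (p:ℤ) • α, α⟫ := by
      apply keyB h (hmem p (by omega) le_rfl) hα
      have : β + (p:ℤ) • α + α = β + ((p:ℤ) + 1) • α := by
        rw [add_smul, one_smul, add_assoc]
      rw [this]; exact hhigh
    rw [inner_aux] at h0
    push_cast at h0
    exact h0
  have hbot : ⟪β, α⟫ - (q:ℝ) * ⟪α, α⟫ ≤ 0 := by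
    have h0 := keyB h (hmem (-(q:ℤ)) le_rfl (by omega)) hnegα
      (by
        have : β + (-(q:ℤ)) • α + -α = β + (-(q:ℤ) - 1) • α := by
          rw [sub_smul, one_smul, ← add_sub_assoc, sub_eq_add_neg]
        rw [this]; exact hlow)
    rw [inner_neg_right, inner_aux] at h0
    push_cast at h0
    linarith
  -- no roots above p
  have Hup : ∀ k : ℕ, β + ((p:ℤ) + 1 + k) • α ∉ Φ ∪ {0} := by
    intro k
    induction k with
    | zero => simpa using hhigh
    | succ k ih =>
      intro hmem'
      have hprev : β + ((p:ℤ) + 1 + ((k:ℤ)+1)) • α + -α = β + ((p:ℤ) + 1 + k) • α := by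
        rw [show ((p:ℤ) + 1 + ((k:ℤ)+1)) = ((p:ℤ) + 1 + (k:ℤ)) + 1 by ring, add_smul, one_smul]
        abel
      have h1 : (0:ℝ) ≤ ⟪β + ((p:ℤ) + 1 + ((k:ℤ)+1)) • α, -α⟫ :=
        keyB h (by push_cast at hmem' ⊢; exact hmem') hnegα (by rw [hprev]; exact ih)
      rw [inner_neg_right, inner_aux] at h1
      push_cast at h1
      nlinarith [mul_pos (show (0:ℝ) < (k:ℝ) + 2 by positivity) hαα]
  have Hdown : ∀ k : ℕ, β + (-(q:ℤ) - 1 - k) • α ∉ Φ ∪ {0} := by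
    intro k
    induction k with
    | zero => simpa using hlow
    | succ k ih =>
      intro hmem'
      have hprev : β + (-(q:ℤ) - 1 - ((k:ℤ)+1)) • α + α = β + (-(q:ℤ) - 1 - k) • α := by
        rw [show (-(q:ℤ) - 1 - ((k:ℤ)+1)) = (-(q:ℤ) - 1 - (k:ℤ)) - 1 by ring, sub_smul, one_smul]
        abel
      have h1 : (0:ℝ) ≤ ⟪β + (-(q:ℤ) - 1 - ((k:ℤ)+1)) • α, α⟫ :=
        keyB h (by push_cast at hmem' ⊢; exact hmem') hα (by rw [hprev]; exact ih)
      rw [inner_aux] at h1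
      push_cast at h1
      nlinarith [mul_pos (show (0:ℝ) < (k:ℝ) + 2 by positivity) hαα]
  -- hence any member of the string has index in [-q, p]
  have Trange : ∀ j : ℤ, β + j • α ∈ Φ ∪ {0} → -(q:ℤ) ≤ j ∧ j ≤ (p:ℤ) := by
    intro j hj
    constructor
    · by_contra hc
      push_neg at hc
      have hk : j = -(q:ℤ) - 1 - ((-(q:ℤ) - 1 - j).toNat) := by omega
      exact Hdown _ (by rw [← hk]; exact hj)
    · by_contra hc
      push_neg at hc
      have hk : j = (p:ℤ) + 1 + ((j - (p:ℤ) - 1).toNat) := by omega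
      exact Hup _ (by rw [← hk]; exact hj)
  -- reflection: if β + j•α ∈ S then β + (-n-j)•α ∈ S
  have Refl : ∀ j : ℤ, β + j • α ∈ Φ ∪ {0} → β + (-n - j) • α ∈ Φ ∪ {0} := by
    intro j hj
    rcases hj with hj | hj
    · left
      have hr := h.reflect_mem α hα _ hj
      have hcoef : 2 * ⟪β + j • α, α⟫ / ⟪α, α⟫ = (n:ℝ) + 2 * j := by
        rw [inner_aux, mul_add, ← hn]
        field_simp
      rw [hcoef] at hr
      have : β + j • α - ((n:ℝ) + 2 * j) • α = β + (-n - j) • α := by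
        rw [← Int.cast_smul_eq_zsmul ℝ (-n - j), ← Int.cast_smul_eq_zsmul ℝ j]
        push_cast
        module
      rwa [this] at hr
    · right
      simp only [Set.mem_singleton_iff] at hj ⊢
      have hβ' : β = (-j) • α := by
        have : β + j • α = 0 := hj
        rw [neg_smul]; linear_combination (norm := abel) this
      have hj2 : n = -2 * j := by
        have : ⟪β, α⟫ = -(j:ℝ) * ⟪α, α⟫ := by
          rw [hβ', ← Int.cast_smul_eq_zsmul ℝ, real_inner_smul_left]; push_cast; ring
        have hn' : (n:ℝ) = -2 * j := by
          rw [← hn, this]; field_simp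
        exact_mod_cast hn'
      rw [show -n - j = j by omega]
      exact hj
  -- conclude
  have h1 : -(q:ℤ) ≤ -n - p := (Trange _ (Refl (p:ℤ) (hmem _ (by omega) le_rfl))).1
  have h2 : -n + q ≤ (p:ℤ) := by
    have := (Trange _ (Refl (-(q:ℤ)) (hmem _ le_rfl (by omega)))).2
    omega
  have : n = (q:ℤ) - p := by omega
  rw [hn, this]
  push_cast
  ring
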